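/- For every x > 0, the Mills ratio of the standard normal distribution admits the representation m(x) = 2∫₀^∞ (x/(x² + t²)) φ(t) dt, where φ(t) = e^{-t²/2}/√(2π). -/

import Mathlib

open Real MeasureTheory Set

lemma integral_exp_neg_mul_Ioi_zero {a : ℝ} (ha : 0 < a) :
    ∫ s in Set.Ioi (0:ℝ), Real.exp (-(a * s)) = 1 / a := by
  have h := MeasureTheory.integral_comp_mul_left_Ioi (fun u => Real.exp (-u)) 0 ha
  simp only [mul_zero] at h
  rw [h, integral_exp_neg_Ioi]
  simp [one_div]

-- step 1: pointwise representation
lemma step1 {x : ℝ} (hx : 0 < x) (t : ℝ) :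
    x / (x^2 + t^2) * Real.exp (-t^2/2)
      = ∫ s in Set.Ioi (0:ℝ), x * Real.exp (-((x^2+t^2)*s)) * Real.exp (-t^2/2) := by
  have hpos : 0 < x^2 + t^2 := by positivity
  rw [MeasureTheory.integral_mul_const, MeasureTheory.integral_const_mul,
    integral_exp_neg_mul_Ioi_zero hpos]
  ring

-- integrability of the s-slice
lemma slice_int {x : ℝ} (hx : 0 < x) (t : ℝ) :
    IntegrableOn (fun s => x * Real.exp (-((x^2+t^2)*s)) * Real.exp (-t^2/2)) (Set.Ioi 0) := by
  have hpos : 0 < x^2 + t^2 := by positivity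
  have h := exp_neg_integrableOn_Ioi 0 hpos
  simp only [neg_mul] at h
  exact (h.const_mul x).mul_const _

-- integrability of t ↦ x/(x²+t²) e^{-t²/2} on Ioi 0
lemma Jint {x : ℝ} (hx : 0 < x) :
    IntegrableOn (fun t => x / (x^2 + t^2) * Real.exp (-t^2/2)) (Set.Ioi 0) := by
  have hg : IntegrableOn (fun t : ℝ => (1/x) * Real.exp (-(1/2 : ℝ) * t^2)) (Set.Ioi 0) :=
    ((integrable_exp_neg_mul_sq (by norm_num : (0:ℝ) < 1/2)).integrableOn).const_mul _
  refine hg.mono' ?_ ?_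
  · refine (Continuous.aestronglyMeasurable ?_).restrict
    exact (continuous_const.div (by continuity) (fun t => by positivity)).mul
      (Real.continuous_exp.comp (by continuity))
  · refine ae_of_all _ fun t => ?_
    have h1 : 0 < x^2 + t^2 := by positivity
    have h2 : x / (x^2 + t^2) ≤ 1/x := by
      rw [div_le_div_iff₀ h1 hx]
      nlinarith [sq_nonneg t]
    have h3 : -(1/2 : ℝ) * t^2 = -t^2/2 := by ring
    rw [Real.norm_eq_abs, abs_of_nonneg (by positivity), h3]
    exact mul_le_mul_of_nonneg_right h2 (Real.exp_nonneg _)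

-- Fubini: integrability on the product
lemma prod_int {x : ℝ} (hx : 0 < x) :
    Integrable (Function.uncurry fun t s => x * Real.exp (-((x^2+t^2)*s)) * Real.exp (-t^2/2))
      ((volume.restrict (Set.Ioi 0)).prod (volume.restrict (Set.Ioi 0))) := by
  have hcont : Continuous (fun p : ℝ × ℝ =>
      x * Real.exp (-((x^2 + p.1^2) * p.2)) * Real.exp (-p.1^2/2)) := by
    fun_prop
  show Integrable (fun p : ℝ × ℝ =>
      x * Real.exp (-((x^2 + p.1^2) * p.2)) * Real.exp (-p.1^2/2)) _
  rw [MeasureTheory.integrable_prod_iff hcont.aestronglyMeasurable]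
  constructor
  · exact ae_of_all _ fun t => slice_int hx t
  · have : (fun t => ∫ s in Set.Ioi (0:ℝ),
        ‖x * Real.exp (-((x^2+t^2)*s)) * Real.exp (-t^2/2)‖)
        = fun t => x / (x^2 + t^2) * Real.exp (-t^2/2) := by
      funext t
      have hn : ∀ s : ℝ, ‖x * Real.exp (-((x^2+t^2)*s)) * Real.exp (-t^2/2)‖
          = x * Real.exp (-((x^2+t^2)*s)) * Real.exp (-t^2/2) := fun s => by
        rw [Real.norm_eq_abs, abs_of_nonneg (by positivity)]
      simp only [hn]
      exact (step1 hx t).symm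
    rw [this]
    exact Jint hx

-- inner t-integral for fixed s > 0
lemma inner_t {x : ℝ} (hx : 0 < x) {s : ℝ} (hs : 0 < s) :
    ∫ t in Set.Ioi (0:ℝ), x * Real.exp (-((x^2+t^2)*s)) * Real.exp (-t^2/2)
      = x * Real.exp (-(x^2*s)) * (Real.sqrt (π/(s+1/2))/2) := by
  have hpt : ∀ t : ℝ, x * Real.exp (-((x^2+t^2)*s)) * Real.exp (-t^2/2)
      = (x * Real.exp (-(x^2*s))) * Real.exp (-(s+1/2) * t^2) := by
    intro t
    rw [mul_assoc, ← Real.exp_add, mul_assoc, ← Real.exp_add]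
    congr 2
    ring
  simp only [hpt]
  rw [MeasureTheory.integral_const_mul, integral_gaussian_Ioi (s+1/2)]

-- image of Ioi 1 under u ↦ (u²-1)/2
lemma img_lemma : (fun u : ℝ => (u^2 - 1)/2) '' Set.Ioi 1 = Set.Ioi (0:ℝ) := by
  ext y
  simp only [Set.mem_image, Set.mem_Ioi]
  constructor
  · rintro ⟨u, hu, rfl⟩; nlinarith
  · intro hy
    refine ⟨Real.sqrt (2*y+1), ?_, ?_⟩
    · calc (1:ℝ) = Real.sqrt 1 := Real.sqrt_one.symm
        _ < Real.sqrt (2*y+1) := Real.sqrt_lt_sqrt (by norm_num) (by linarith)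
    · rw [Real.sq_sqrt (by linarith)]; ring

lemma deriv_lemma : ∀ u ∈ Set.Ioi (1:ℝ),
    HasDerivWithinAt (fun u : ℝ => (u^2 - 1)/2) u (Set.Ioi 1) u := by
  intro u hu
  have h := (((hasDerivAt_pow 2 u).sub_const 1).div_const 2).hasDerivWithinAt (s := Set.Ioi 1)
  norm_num at h
  convert h using 1

lemma inj_lemma : Set.InjOn (fun u : ℝ => (u^2 - 1)/2) (Set.Ioi 1) := by
  intro a ha b hb hab
  simp only [Set.mem_Ioi] at ha hb
  simp only at hab
  have h2 : a^2 = b^2 := by linarith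
  have h3 : (a - b) * (a + b) = 0 := by linear_combination h2
  rcases mul_eq_zero.mp h3 with h | h
  · linarith
  · linarith

-- the main computation of J
lemma Jval {x : ℝ} (hx : 0 < x) :
    ∫ t in Set.Ioi (0:ℝ), x / (x^2 + t^2) * Real.exp (-t^2/2)
      = Real.sqrt (2*π)/2 * Real.exp (x^2/2) * ∫ v in Set.Ioi x, Real.exp (-v^2/2) := by
  calc ∫ t in Set.Ioi (0:ℝ), x / (x^2 + t^2) * Real.exp (-t^2/2)
      = ∫ t in Set.Ioi (0:ℝ), ∫ s in Set.Ioi (0:ℝ),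
          x * Real.exp (-((x^2+t^2)*s)) * Real.exp (-t^2/2) := by
        exact MeasureTheory.setIntegral_congr_fun measurableSet_Ioi fun t _ => step1 hx t
    _ = ∫ s in Set.Ioi (0:ℝ), ∫ t in Set.Ioi (0:ℝ),
          x * Real.exp (-((x^2+t^2)*s)) * Real.exp (-t^2/2) := by
        exact MeasureTheory.integral_integral_swap (prod_int hx)
    _ = ∫ s in Set.Ioi (0:ℝ), x * Real.exp (-(x^2*s)) * (Real.sqrt (π/(s+1/2))/2) := by
        exact MeasureTheory.setIntegral_congr_fun measurableSet_Ioi fun s hs => inner_t hx hs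
    _ = ∫ u in Set.Ioi (1:ℝ), |u| • (x * Real.exp (-(x^2*((u^2-1)/2)))
          * (Real.sqrt (π/((u^2-1)/2+1/2))/2)) := by
        rw [← img_lemma,
          integral_image_eq_integral_abs_deriv_smul measurableSet_Ioi deriv_lemma inj_lemma]
    _ = ∫ u in Set.Ioi (1:ℝ), (x * Real.exp (x^2/2) * Real.sqrt (2*π)/2)
          * Real.exp (-(x*u)^2/2) := by
        refine MeasureTheory.setIntegral_congr_fun measurableSet_Ioi fun u hu => ?_
        have hu0 : (0:ℝ) < u := lt_trans one_pos hu
        have h1 : (u^2-1)/2 + 1/2 = u^2/2 := by ring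
        have h2 : Real.sqrt (π/((u^2-1)/2+1/2)) = Real.sqrt (2*π)/u := by
          rw [h1, show π/(u^2/2) = 2*π/u^2 by ring, Real.sqrt_div (by positivity),
            Real.sqrt_sq hu0.le]
        have h3 : Real.exp (-(x^2*((u^2-1)/2))) = Real.exp (x^2/2) * Real.exp (-(x*u)^2/2) := by
          rw [← Real.exp_add]; congr 1; ring
        rw [smul_eq_mul, abs_of_pos hu0, h2, h3]
        field_simp
    _ = (x * Real.exp (x^2/2) * Real.sqrt (2*π)/2)
          * ∫ u in Set.Ioi (1:ℝ), Real.exp (-(x*u)^2/2) := by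
        rw [MeasureTheory.integral_const_mul]
    _ = Real.sqrt (2*π)/2 * Real.exp (x^2/2) * ∫ v in Set.Ioi x, Real.exp (-v^2/2) := by
        rw [MeasureTheory.integral_comp_mul_left_Ioi (fun v => Real.exp (-v^2/2)) 1 hx]
        rw [mul_one, smul_eq_mul]
        field_simp

/-- The standard normal probability density function. -/
noncomputable def stdNormalPDF (t : ℝ) : ℝ := Real.exp (-t ^ 2 / 2) / Real.sqrt (2 * Real.pi)

/-- The Mills ratio of the standard normal distribution: survival function over density. -/
noncomputable def millsRatio (x : ℝ) : ℝ := (∫ t in Set.Ioi x, stdNormalPDF t) / stdNormalPDF x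

/-- For every `x > 0`, the Mills ratio of the standard normal distribution admits the
representation `m(x) = 2 ∫₀^∞ (x/(x² + t²)) φ(t) dt`. -/
theorem millsRatio_eq_two_mul_integral (x : ℝ) (hx : 0 < x) :
    millsRatio x = 2 * ∫ t in Set.Ioi (0 : ℝ), x / (x ^ 2 + t ^ 2) * stdNormalPDF t := by
  have hC : (0:ℝ) < Real.sqrt (2*π) := Real.sqrt_pos.mpr (by positivity)
  have hexp : ∀ t : ℝ, -t ^ 2 / 2 = -(t^2)/2 := fun t => rfl
  have hRHS : ∫ t in Set.Ioi (0:ℝ), x / (x ^ 2 + t ^ 2) * stdNormalPDF t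
      = (∫ t in Set.Ioi (0:ℝ), x / (x^2+t^2) * Real.exp (-t^2/2)) / Real.sqrt (2*π) := by
    rw [← MeasureTheory.integral_div]
    congr 1
    funext t
    simp only [stdNormalPDF, mul_div_assoc]
  have hLHS : (∫ t in Set.Ioi x, stdNormalPDF t)
      = (∫ t in Set.Ioi x, Real.exp (-t^2/2)) / Real.sqrt (2*π) := by
    rw [← MeasureTheory.integral_div]
    rfl
  rw [millsRatio, hLHS, hRHS, Jval hx, stdNormalPDF]
  have hne : Real.exp (-x^2/2) ≠ 0 := Real.exp_ne_zero _
  have hx2 : Real.exp (x^2/2) * Real.exp (-x^2/2) = 1 := by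
    rw [← Real.exp_add, show x^2/2 + -x^2/2 = 0 by ring, Real.exp_zero]
  field_simp
  rw [neg_div] at hx2
  linear_combination (-(∫ t in Set.Ioi x, Real.exp (-(t^2/2)))) * hx2
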